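/- Let (λᵢ)_{i≥1} and (μⱼ)_{j≥1} be nonnegative real sequences with λ₁ = μ₁ = 1, λᵢ < 1 for i ≥ 2, μⱼ < 1 for j ≥ 2, Σᵢ λᵢ² < ∞, Σⱼ μⱼ² < ∞, and let (cᵢⱼ) satisfy Σᵢ cᵢⱼ₀² = Σⱼ c_{i₀j}² = 1 for all i₀, j₀. Then lim_{t→∞} [Σᵢ λᵢ^{2t} + Σⱼ μⱼ^{2t} − 2 Σ_{i,j} λᵢᵗ μⱼᵗ cᵢⱼ²] = 2(1 − c₁₁²). -/

import Mathlib

open Filter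

/-- Asymptotics of the global diffusion distance for connected graphs.
With eigenvalue sequences `l`, `m` (indexed from 0, so `l 0 = m 0 = 1` are the top
eigenvalues), spectral gaps `l i < 1`, `m j < 1` for `i, j ≥ 1`, square-summability, and
overlap coefficients `c` with unit row and column square sums,
`∑ᵢ lᵢ^{2t} + ∑ⱼ mⱼ^{2t} − 2 ∑_{i,j} lᵢᵗ mⱼᵗ cᵢⱼ² → 2(1 − c₀₀²)` as `t → ∞`. -/
theorem stmt9 (l m : ℕ → ℝ) (c : ℕ → ℕ → ℝ)
    (hlnn : ∀ i, 0 ≤ l i) (hmnn : ∀ j, 0 ≤ m j)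
    (hl0 : l 0 = 1) (hm0 : m 0 = 1)
    (hlgap : ∀ i, 1 ≤ i → l i < 1) (hmgap : ∀ j, 1 ≤ j → m j < 1)
    (hlsq : Summable (fun i => l i ^ 2)) (hmsq : Summable (fun j => m j ^ 2))
    (hrow : ∀ j₀, ∑' i, c i j₀ ^ 2 = 1) (hcol : ∀ i₀, ∑' j, c i₀ j ^ 2 = 1) :
    Tendsto
      (fun t : ℕ =>
        (∑' i, l i ^ (2 * t)) + (∑' j, m j ^ (2 * t))
          - 2 * ∑' i, ∑' j, l i ^ t * m j ^ t * c i j ^ 2)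
      atTop (nhds (2 * (1 - c 0 0 ^ 2))) := by
  have hle : ∀ i, l i ≤ 1 := by
    intro i
    rcases Nat.eq_zero_or_pos i with h | h
    · simp [h, hl0]
    · exact (hlgap i h).le
  have hme : ∀ j, m j ≤ 1 := by
    intro j
    rcases Nat.eq_zero_or_pos j with h | h
    · simp [h, hm0]
    · exact (hmgap j h).le
  have hcolS : ∀ i₀, Summable (fun j => c i₀ j ^ 2) := by
    intro i₀
    by_contra h
    simpa [tsum_eq_zero_of_not_summable h] using hcol i₀
  -- part A : ∑' i, l i ^ (2t) → 1
  have hA : Tendsto (fun t : ℕ => ∑' i, l i ^ (2 * t)) atTop (nhds 1) := by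
    have key : Tendsto (fun t : ℕ => ∑' i, l i ^ (2 * t)) atTop
        (nhds (∑' i : ℕ, if i = 0 then (1:ℝ) else 0)) := by
      apply tendsto_tsum_of_dominated_convergence (bound := fun i => l i ^ 2) hlsq
      · intro i
        rcases Nat.eq_zero_or_pos i with h | h
        · simpa [h, hl0] using tendsto_const_nhds
        · simp only [if_neg (Nat.pos_iff_ne_zero.mp h), pow_mul]
          exact tendsto_pow_atTop_nhds_zero_of_lt_one (sq_nonneg (l i))
            (by nlinarith [hlnn i, hlgap i h])
      · filter_upwards [eventually_ge_atTop 1] with t ht i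
        rw [Real.norm_of_nonneg (pow_nonneg (hlnn i) _)]
        exact pow_le_pow_of_le_one (hlnn i) (hle i) (by omega)
    rwa [tsum_ite_eq 0 (fun _ => (1:ℝ))] at key
  have hB : Tendsto (fun t : ℕ => ∑' j, m j ^ (2 * t)) atTop (nhds 1) := by
    have key : Tendsto (fun t : ℕ => ∑' j, m j ^ (2 * t)) atTop
        (nhds (∑' j : ℕ, if j = 0 then (1:ℝ) else 0)) := by
      apply tendsto_tsum_of_dominated_convergence (bound := fun j => m j ^ 2) hmsq
      · intro j
        rcases Nat.eq_zero_or_pos j with h | h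
        · simpa [h, hm0] using tendsto_const_nhds
        · simp only [if_neg (Nat.pos_iff_ne_zero.mp h), pow_mul]
          exact tendsto_pow_atTop_nhds_zero_of_lt_one (sq_nonneg (m j))
            (by nlinarith [hmnn j, hmgap j h])
      · filter_upwards [eventually_ge_atTop 1] with t ht j
        rw [Real.norm_of_nonneg (pow_nonneg (hmnn j) _)]
        exact pow_le_pow_of_le_one (hmnn j) (hme j) (by omega)
    rwa [tsum_ite_eq 0 (fun _ => (1:ℝ))] at key
  -- inner sum facts
  have hinner_le : ∀ (t : ℕ) (i : ℕ), (∑' j, l i ^ t * m j ^ t * c i j ^ 2) ≤ l i ^ t := by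
    intro t i
    have h1 : (∑' j, l i ^ t * m j ^ t * c i j ^ 2) ≤ ∑' j, l i ^ t * c i j ^ 2 := by
      apply Summable.tsum_le_tsum
      · intro j
        have hmj : m j ^ t ≤ 1 := pow_le_one₀ (hmnn j) (hme j)
        calc l i ^ t * m j ^ t * c i j ^ 2
            = (l i ^ t * c i j ^ 2) * m j ^ t := by ring
          _ ≤ l i ^ t * c i j ^ 2 := mul_le_of_le_one_right (mul_nonneg (pow_nonneg (hlnn i) t) (sq_nonneg _)) hmj
      · apply Summable.of_nonneg_of_le (fun j => mul_nonneg (mul_nonneg (pow_nonneg (hlnn i) t) (pow_nonneg (hmnn j) t)) (sq_nonneg _))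
          (fun j => ?_) ((hcolS i).mul_left (l i ^ t))
        have hmj : m j ^ t ≤ 1 := pow_le_one₀ (hmnn j) (hme j)
        calc l i ^ t * m j ^ t * c i j ^ 2
            = (l i ^ t * c i j ^ 2) * m j ^ t := by ring
          _ ≤ l i ^ t * c i j ^ 2 := mul_le_of_le_one_right (mul_nonneg (pow_nonneg (hlnn i) t) (sq_nonneg _)) hmj
      · exact (hcolS i).mul_left _
    calc (∑' j, l i ^ t * m j ^ t * c i j ^ 2) ≤ ∑' j, l i ^ t * c i j ^ 2 := h1
      _ = l i ^ t * ∑' j, c i j ^ 2 := tsum_mul_left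
      _ = l i ^ t := by rw [hcol i, mul_one]
  have hinner_nn : ∀ (t : ℕ) (i : ℕ), 0 ≤ ∑' j, l i ^ t * m j ^ t * c i j ^ 2 := by
    intro t i
    exact tsum_nonneg (fun j => mul_nonneg (mul_nonneg (pow_nonneg (hlnn i) t) (pow_nonneg (hmnn j) t)) (sq_nonneg _))
  -- part C : double sum → c 0 0 ^ 2
  have hC : Tendsto (fun t : ℕ => ∑' i, ∑' j, l i ^ t * m j ^ t * c i j ^ 2) atTop
      (nhds (c 0 0 ^ 2)) := by
    have hbound : Summable (fun i : ℕ => l i ^ 2 + if i = 0 then (1:ℝ) else 0) := by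
      apply hlsq.add
      apply summable_of_ne_finset_zero (s := {0})
      intro i hi
      simp at hi
      simp [hi]
    have key : Tendsto (fun t : ℕ => ∑' i, ∑' j, l i ^ t * m j ^ t * c i j ^ 2) atTop
        (nhds (∑' i : ℕ, if i = 0 then c 0 0 ^ 2 else 0)) := by
      apply tendsto_tsum_of_dominated_convergence
        (bound := fun i : ℕ => l i ^ 2 + if i = 0 then (1:ℝ) else 0) hbound
      · intro i
        rcases Nat.eq_zero_or_pos i with h | h
        · subst h
          simp only [if_pos rfl]
          have inner : Tendsto (fun t : ℕ => ∑' j, m j ^ t * c 0 j ^ 2) atTop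
              (nhds (∑' j : ℕ, if j = 0 then c 0 0 ^ 2 else 0)) := by
            apply tendsto_tsum_of_dominated_convergence
              (bound := fun j => c 0 j ^ 2) (hcolS 0)
            · intro j
              rcases Nat.eq_zero_or_pos j with h | h
              · simpa [h, hm0] using tendsto_const_nhds
              · simp only [if_neg (Nat.pos_iff_ne_zero.mp h)]
                have := (tendsto_pow_atTop_nhds_zero_of_lt_one (hmnn j) (hmgap j h)).mul_const
                  (c 0 j ^ 2)
                simpa using this
            · filter_upwards with t j
              rw [Real.norm_of_nonneg (mul_nonneg (pow_nonneg (hmnn j) t) (sq_nonneg _))]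
              calc m j ^ t * c 0 j ^ 2
                  = c 0 j ^ 2 * m j ^ t := by ring
                _ ≤ c 0 j ^ 2 := mul_le_of_le_one_right (sq_nonneg _)
                    (pow_le_one₀ (hmnn j) (hme j))
          have heq : (fun t : ℕ => ∑' j, l 0 ^ t * m j ^ t * c 0 j ^ 2)
              = fun t : ℕ => ∑' j, m j ^ t * c 0 j ^ 2 := by
            funext t
            simp [hl0]
          rw [heq]
          rwa [tsum_ite_eq 0 (fun _ => c 0 0 ^ 2)] at inner
        · simp only [if_neg (Nat.pos_iff_ne_zero.mp h)]
          apply squeeze_zero (fun t => hinner_nn t i) (fun t => hinner_le t i)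
          exact tendsto_pow_atTop_nhds_zero_of_lt_one (hlnn i) (hlgap i h)
      · filter_upwards [eventually_ge_atTop 2] with t ht i
        rw [Real.norm_of_nonneg (hinner_nn t i)]
        rcases Nat.eq_zero_or_pos i with h | h
        · subst h
          have h1 : (∑' j, l 0 ^ t * m j ^ t * c 0 j ^ 2) ≤ l 0 ^ t := hinner_le t 0
          have hl0t : l 0 ^ t = 1 := by rw [hl0, one_pow]
          rw [if_pos rfl]
          nlinarith [sq_nonneg (l 0)]
        · have h1 : (∑' j, l i ^ t * m j ^ t * c i j ^ 2) ≤ l i ^ t := hinner_le t i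
          have h2 : l i ^ t ≤ l i ^ 2 := pow_le_pow_of_le_one (hlnn i) (hle i) ht
          simp only [if_neg (Nat.pos_iff_ne_zero.mp h), add_zero]
          linarith
    rwa [tsum_ite_eq 0 (fun _ => c 0 0 ^ 2)] at key
  have := (hA.add hB).sub ((hC.const_mul 2))
  convert this using 2
  ring
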